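/- arXiv:2004.02505 — 13 statements merged into one kernel-verified Lean document; each statement's English description precedes it below -/
import Mathlib

section
/- If (S, ⊣) is a monoid with identity e and (S, ⊢) is an interassociate of (S, ⊣), then there exists a ∈ S such that x ⊢ y = x ⊣ a ⊣ y for all x, y ∈ S (namely a = e ⊢ e). -/
/-- If `(S, ⊣)` (written `d`) is a monoid with identity `e` and `(S, ⊢)` (written `h`)
is an interassociate of `(S, ⊣)`, then there is `a ∈ S` with `x ⊢ y = x ⊣ a ⊣ y`. -/
theorem monoid_interassociate_is_variant {S : Type*} (d h : S → S → S) (e : S)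
    (d_assoc : ∀ x y z, d (d x y) z = d x (d y z))
    (e_left : ∀ x, d e x = x) (e_right : ∀ x, d x e = x)
    (h_assoc : ∀ x y z, h (h x y) z = h x (h y z))
    (inter1 : ∀ x y z, h (d x y) z = d x (h y z))
    (inter2 : ∀ x y z, d (h x y) z = h x (d y z)) :
    ∃ a : S, ∀ x y, h x y = d (d x a) y := by
  refine ⟨h e e, fun x y => ?_⟩
  calc h x y = h x (d e y) := by rw [e_left]
    _ = d (h x e) y := (inter2 x e y).symm
    _ = d (h (d x e) e) y := by rw [e_right]
    _ = d (d x (h e e)) y := by rw [inter1]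
end

section
/- Every group is isomorphic to each of its interassociates: if (G, ⊣) is a group and (G, ⊢) is an interassociate of (G, ⊣), then the semigroup (G, ⊢) is isomorphic to the semigroup (G, ⊣). -/
/-- Every group is isomorphic to each of its interassociates. -/
theorem group_isomorphic_to_interassociate {G : Type*} [Group G] (h : G → G → G)
    (h_assoc : ∀ x y z, h (h x y) z = h x (h y z))
    (inter1 : ∀ x y z, h (x * y) z = x * h y z)
    (inter2 : ∀ x y z, h x y * z = h x (y * z)) :
    ∃ ψ : G ≃ G, ∀ x y, ψ (h x y) = ψ x * ψ y := by
  have key : ∀ x y, h x y = x * h 1 1 * y := by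
    intro x y
    calc h x y = h (x * 1) y := by rw [mul_one]
    _ = x * h 1 y := inter1 x 1 y
    _ = x * h 1 (1 * y) := by rw [one_mul]
    _ = x * (h 1 1 * y) := by rw [← inter2]
    _ = x * h 1 1 * y := (mul_assoc _ _ _).symm
  refine ⟨Equiv.mulLeft (h 1 1), fun x y => ?_⟩
  simp only [Equiv.coe_mulLeft, key x y]
  group
end

section
/- If (D, ⊣, ⊢) is a doppelsemigroup and z is a left zero of the semigroup (D, ⊣) (i.e., z ⊣ a = z for all a ∈ D), then z is a left zero of the semigroup (D, ⊢). -/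
/-- In a doppelsemigroup, a left zero of `(D, ⊣)` is a left zero of `(D, ⊢)`. -/
theorem left_zero_of_doppelsemigroup {D : Type*} (d h : D → D → D)
    (d_assoc : ∀ x y z, d (d x y) z = d x (d y z))
    (h_assoc : ∀ x y z, h (h x y) z = h x (h y z))
    (ax1 : ∀ x y z, h (d x y) z = d x (h y z))
    (ax2 : ∀ x y z, d (h x y) z = h x (d y z))
    (z : D) (hz : ∀ a, d z a = z) :
    ∀ a, h z a = z := by
  intro a
  calc h z a = h (d z z) a := by rw [hz]
    _ = d z (h z a) := ax1 z z a
    _ = z := hz _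
end

section
/- Let l : S → S be a left translation of a semigroup (S, *), i.e., l(x * y) = l(x) * y for all x, y. Then the operation x *_l y := x * l(y) is associative and (S, *_l) is an interassociate of (S, *). -/
/-- If `l` is a left translation of a semigroup `(S, *)` (written `m`), then
`x *_l y := x * l y` is associative and `(S, *_l)` is an interassociate of `(S, *)`. -/
theorem left_translation_gives_interassociate {S : Type*} (m : S → S → S)
    (m_assoc : ∀ x y z, m (m x y) z = m x (m y z))
    (l : S → S) (hl : ∀ x y, l (m x y) = m (l x) y) :
    (∀ x y z, m (m x (l y)) (l z) = m x (l (m y (l z)))) ∧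
    (∀ x y z, m (m x y) (l z) = m x (m y (l z))) ∧
    (∀ x y z, m (m x (l y)) z = m x (l (m y z))) := by
  refine ⟨fun x y z => ?_, fun x y z => ?_, fun x y z => ?_⟩ <;>
    simp [hl, m_assoc]
end

section
/- If (M, ⊣) is a commutative monoid and a₁, a₂ ∈ M, then the variants (M, ⊣_{a₁}) and (M, ⊣_{a₂}) (where x ⊣_a y = x ⊣ a ⊣ y) are strong interassociates of each other, i.e., x ⊣_{a₁} (y ⊣_{a₂} z) = x ⊣_{a₂} (y ⊣_{a₁} z) for all x, y, z, in addition to the two interassociativity axioms. -/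
/-- In a commutative monoid, any two variants are strong interassociates of each other. -/
theorem variants_of_comm_monoid_strong_interassociates {M : Type*} [CommMonoid M]
    (a₁ a₂ : M) :
    (∀ x y z : M, (x * a₁ * y) * a₂ * z = x * a₁ * (y * a₂ * z)) ∧
    (∀ x y z : M, (x * a₂ * y) * a₁ * z = x * a₂ * (y * a₁ * z)) ∧
    (∀ x y z : M, x * a₁ * (y * a₂ * z) = x * a₂ * (y * a₁ * z)) := by
  refine ⟨fun x y z => by simp only [mul_assoc], fun x y z => by simp only [mul_assoc], fun x y z => by simp only [← mul_assoc]; rw [mul_right_comm x a₁ y, mul_right_comm x a₂ y, mul_right_comm (x*y) a₁ a₂]⟩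
end

section
/- With the operations ⊣_A as above (x ⊣_A y = x if y ∈ A, else 0, on X⁰ = X ∪ {0}), the semigroup (X⁰, ⊣_A) is a strong interassociate of (X⁰, ⊣_B) if and only if A = B or A = ∅ or B = ∅. -/
open scoped Classical

/-- `(X⁰, ⊣_A)` is a strong interassociate of `(X⁰, ⊣_B)` iff `A = B`, `A = ∅` or
`B = ∅`. Here `x ⊣_A y = x` if `y ∈ A` and `= z` (the zero) otherwise, with `z ∉ A`,
`z ∉ B`. -/
theorem LO_tilde_zero_strong_iff {X0 : Type*} (z : X0) (A B : Set X0)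
    (hA : z ∉ A) (hB : z ∉ B) :
    ((∀ x y w : X0, (fun p q => if q ∈ B then p else z)
          ((fun p q => if q ∈ A then p else z) x y) w
        = (fun p q => if q ∈ A then p else z) x
          ((fun p q => if q ∈ B then p else z) y w)) ∧
     (∀ x y w : X0, (fun p q => if q ∈ A then p else z)
          ((fun p q => if q ∈ B then p else z) x y) w
        = (fun p q => if q ∈ B then p else z) x
          ((fun p q => if q ∈ A then p else z) y w)) ∧
     (∀ x y w : X0, (fun p q => if q ∈ B then p else z) x
          ((fun p q => if q ∈ A then p else z) y w)
        = (fun p q => if q ∈ A then p else z) x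
          ((fun p q => if q ∈ B then p else z) y w)))
    ↔ (A = B ∨ A = ∅ ∨ B = ∅) := by
  constructor
  · rintro ⟨-, -, h3⟩
    rcases A.eq_empty_or_nonempty with hAe | ⟨a, ha⟩
    · exact Or.inr (Or.inl hAe)
    rcases B.eq_empty_or_nonempty with hBe | ⟨b, hb⟩
    · exact Or.inr (Or.inr hBe)
    refine Or.inl (Set.Subset.antisymm ?_ ?_)
    · intro a' ha'
      by_contra hab
      have := h3 a' b a'
      dsimp only at this
      rw [if_neg hab, if_neg hA, if_pos ha', if_pos hb] at this
      exact hA (this ▸ ha')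
    · intro b' hb'
      by_contra hba
      have := h3 a a b'
      dsimp only at this
      rw [if_neg hba, if_neg hB, if_pos hb', if_pos ha] at this
      exact hA (this ▸ ha)
  · rintro (rfl | rfl | rfl) <;>
      refine ⟨fun x y w => ?_, fun x y w => ?_, fun x y w => ?_⟩ <;>
      simp only [Set.mem_empty_iff_false, if_false] <;>
      split_ifs <;> simp_all
end

section
/- Every interassociate of the semigroup LO_X^{+0} (a left zero semigroup with an adjoined zero) is of the form LO^{~0}_{A←X} for some A ⊆ X: if (X⁰, ⊢) is an interassociate of (X⁰, ⊣) where x ⊣ y = x for x, y ∈ X and 0 acts as zero, then there exists A ⊆ X such that x ⊢ y = x if y ∈ A and x ⊢ y = 0 otherwise. -/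
open scoped Classical

/-- Every interassociate of `LO_X^{+0}` (the left zero semigroup on `X` with adjoined
zero, modelled on `Option X` with `none` the zero) is of the form `LO^{~0}_{A←X}`
for some `A ⊆ X`. -/
theorem interassociate_of_LO_plus_zero {X : Type*}
    (h : Option X → Option X → Option X)
    (h_assoc : ∀ x y z, h (h x y) z = h x (h y z))
    (inter1 : ∀ x y z : Option X,
      h ((fun p q => match p, q with
            | some a, some _ => some a
            | _, _ => none) x y) z
        = (fun p q => match p, q with
            | some a, some _ => some a
            | _, _ => none) x (h y z))
    (inter2 : ∀ x y z : Option X,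
      (fun p q => match p, q with
          | some a, some _ => some a
          | _, _ => none) (h x y) z
        = h x ((fun p q => match p, q with
            | some a, some _ => some a
            | _, _ => none) y z)) :
    ∃ A : Set X, ∀ x y : Option X,
      h x y = y.elim none (fun b => if b ∈ A then x else none) := by
  have f1 : ∀ z, h none z = none := by
    intro z
    have := inter1 none none z
    simpa using this
  have f2 : ∀ x, h x none = none := by
    intro x
    have := inter2 x none none
    simpa using this.symm
  refine ⟨{c | ∃ b : X, h (some b) (some c) ≠ none}, ?_⟩
  intro x y
  match y with
  | none => simpa using f2 x
  | some c =>
    simp only [Option.elim]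
    by_cases hc : c ∈ {c | ∃ b : X, h (some b) (some c) ≠ none}
    · obtain ⟨b, hb⟩ := hc
      rw [if_pos ⟨b, hb⟩]
      match x with
      | none => exact f1 _
      | some a =>
        have := inter1 (some a) (some b) (some c)
        simp only at this
        rw [this]
        match hbc : h (some b) (some c) with
        | none => exact absurd hbc hb
        | some d => rfl
    · rw [if_neg hc]
      match x with
      | none => exact f1 _
      | some a =>
        by_contra hne
        exact hc ⟨a, hne⟩
end

section
/- Let X be a set with distinct elements a, c, and define x ⊣ y = x if x ≠ c; c ⊣ y = a if y ≠ c; c ⊣ c = c. If (X, ⊢) is an interassociate of (X, ⊣), then either ⊢ = ⊣, or x ⊢ y = x for x ≠ c and c ⊢ y = a for all y. -/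
/-- Every interassociate of `LOB_X = (X, ⊣_c^a)` is either `⊣_c^a` itself or the
operation `x ⊢ y = x` for `x ≠ c`, `c ⊢ y = a`. -/
theorem interassociate_of_LOB {X : Type*} [DecidableEq X] (a c : X) (hac : a ≠ c)
    (h : X → X → X)
    (h_assoc : ∀ x y z, h (h x y) z = h x (h y z))
    (inter1 : ∀ x y z : X,
      h ((fun p q => if p ≠ c then p else if q ≠ c then a else c) x y) z
        = (fun p q => if p ≠ c then p else if q ≠ c then a else c) x (h y z))
    (inter2 : ∀ x y z : X,
      (fun p q => if p ≠ c then p else if q ≠ c then a else c) (h x y) z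
        = h x ((fun p q => if p ≠ c then p else if q ≠ c then a else c) y z)) :
    (∀ x y, h x y = if x ≠ c then x else if y ≠ c then a else c) ∨
    (∀ x y : X, h x y = if x ≠ c then x else a) := by
  -- For x ≠ c, h x z = x
  have L1 : ∀ x z : X, x ≠ c → h x z = x := by
    intro x z hx
    have := inter1 x x z
    simp only [if_pos hx] at this
    exact this
  -- h c z ∈ {a, c}
  have L2 : ∀ z : X, h c z = a ∨ h c z = c := by
    intro z
    have := inter1 c c z
    simp only [ne_eq, not_true_eq_false, if_false] at this
    by_cases hz : h c z = c
    · right; exact hz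
    · left; rw [if_pos hz] at this; exact this
  -- For z ≠ c, h c z = a
  have L3 : ∀ z : X, z ≠ c → h c z = a := by
    intro z hz
    have := inter2 c z a
    simp only [if_pos hz, if_pos hac] at this
    by_cases hcz : h c z = c
    · rw [hcz] at this
      simp only [ne_eq, not_true_eq_false, if_false, if_pos hac] at this
      exact absurd this hac
    · rw [if_pos hcz] at this
      rcases L2 z with h1 | h1
      · exact h1
      · exact absurd h1 hcz
  rcases L2 c with hcc | hcc
  · right
    intro x y
    by_cases hx : x = c
    · rw [hx]
      simp only [ne_eq, not_true_eq_false, if_false]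
      by_cases hy : y = c
      · rw [hy]; exact hcc
      · exact L3 y hy
    · rw [if_pos hx]; exact L1 x y hx
  · left
    intro x y
    by_cases hx : x = c
    · rw [hx]
      simp only [ne_eq, not_true_eq_false, if_false]
      by_cases hy : y = c
      · rw [hy, if_neg (by simp)]; exact hcc
      · rw [if_pos hy]; exact L3 y hy
    · rw [if_pos hx]; exact L1 x y hx
end

section
/- With distinct a, c ∈ X, the operation x ⊢ y := (x if x ≠ c, a if x = c) is associative, and (X, ⊢) is a strong interassociate of (X, ⊣_c^a), i.e., in addition to the two interassociativity axioms, x ⊣ (y ⊢ z) = x ⊢ (y ⊣ z) holds for all x, y, z ∈ X. -/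
/-- With `a ≠ c`, the operation `x ⊢ y := x` if `x ≠ c`, `c ⊢ y := a`, is associative
and is a strong interassociate of `⊣_c^a`. -/
theorem strong_interassociate_of_LOB {X : Type*} [DecidableEq X] (a c : X) (hac : a ≠ c) :
    (∀ x y z : X, (fun p _ => if p ≠ c then p else a)
        ((fun p _ => if p ≠ c then p else a) x y) z
      = (fun p _ => if p ≠ c then p else a) x
        ((fun p _ => if p ≠ c then p else a) y z)) ∧
    (∀ x y z : X, (fun p _ => if p ≠ c then p else a)
        ((fun p q => if p ≠ c then p else if q ≠ c then a else c) x y) z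
      = (fun p q => if p ≠ c then p else if q ≠ c then a else c) x
        ((fun p _ => if p ≠ c then p else a) y z)) ∧
    (∀ x y z : X, (fun p q => if p ≠ c then p else if q ≠ c then a else c)
        ((fun p _ => if p ≠ c then p else a) x y) z
      = (fun p _ => if p ≠ c then p else a) x
        ((fun p q => if p ≠ c then p else if q ≠ c then a else c) y z)) ∧
    (∀ x y z : X, (fun p q => if p ≠ c then p else if q ≠ c then a else c) x
        ((fun p _ => if p ≠ c then p else a) y z)
      = (fun p _ => if p ≠ c then p else a) x
        ((fun p q => if p ≠ c then p else if q ≠ c then a else c) y z)) := by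
  refine ⟨?_, ?_, ?_, ?_⟩ <;> intro x y z <;> simp only [] <;>
    by_cases hx : x = c <;> by_cases hy : y = c <;> by_cases hz : z = c <;>
    simp_all
end

section
/- A semigroup coincides with each of its interassociates if and only if it is a rectangular band. In particular, if (S, ⊣) is a rectangular band (x ⊣ y ⊣ x = x for all x, y) and (S, ⊢) is an interassociate of (S, ⊣), then ⊢ = ⊣. -/
/-- A semigroup coincides with each of its interassociates if and only if it is a
rectangular band. -/
theorem coincides_with_interassociates_iff_rectangular_band {S : Type*}
    (d : S → S → S) (d_assoc : ∀ x y z, d (d x y) z = d x (d y z)) :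
    (∀ h : S → S → S, (∀ x y z, h (h x y) z = h x (h y z)) →
        (∀ x y z, h (d x y) z = d x (h y z)) →
        (∀ x y z, d (h x y) z = h x (d y z)) →
        h = d)
    ↔ (∀ x y, d (d x y) x = x) := by
  classical
  constructor
  · intro H
    -- sandwich identity from the interassociates  (x, y) ↦ d (d x a) y
    have sand : ∀ a x y, d (d x a) y = d x y := by
      intro a
      have h1 : ∀ x y z, d (d (d (d x a) y) a) z = d (d x a) (d (d y a) z) := by
        intro x y z; simp only [d_assoc]
      have h2 : ∀ x y z, d (d (d x y) a) z = d x (d (d y a) z) := by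
        intro x y z; simp only [d_assoc]
      have h3 : ∀ x y z, d (d (d x a) y) z = d (d x a) (d y z) := by
        intro x y z; simp only [d_assoc]
      have := H (fun x y => d (d x a) y) h1 h2 h3
      intro x y
      exact congrFun (congrFun this x) y
    have sand' : ∀ x y z, d x (d y z) = d x z := by
      intro x y z; rw [← d_assoc, sand]
    -- products are idempotent
    have prodidem : ∀ u v, d (d u v) (d u v) = d u v := by
      intro u v
      rw [sand, sand']
    -- every element is idempotent
    have idem : ∀ a, d a a = a := by
      intro a
      by_contra ha
      have hne : ∀ u v, d u v ≠ a := by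
        intro u v e
        apply ha
        rw [← e]; exact prodidem u v
      set h : S → S → S := fun x y => if x = a ∧ y = a then a else d x y with hdef
      have hval : ∀ x y, ¬(x = a ∧ y = a) → h x y = d x y := by
        intro x y hxy; simp only [hdef, if_neg hxy]
      have haa : h a a = a := by simp [hdef]
      have c1 : ∀ x y z, h (h x y) z = h x (h y z) := by
        intro x y z
        by_cases hxy : x = a ∧ y = a
        · obtain ⟨hx, hy⟩ := hxy
          rw [hx, hy, haa]
          by_cases hz : z = a
          · rw [hz, haa, haa]
          · have e1 : h a z = d a z := hval a z (fun ⟨_, e⟩ => hz e)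
            rw [e1, hval a (d a z) (fun ⟨_, e⟩ => hne a z e), sand']
        · rw [hval x y hxy, hval (d x y) z (fun ⟨e, _⟩ => hne x y e), sand]
          by_cases hyz : y = a ∧ z = a
          · obtain ⟨hy, hz⟩ := hyz
            rw [hy, hz, haa, hval x a (fun hh => hxy ⟨hh.1, hy⟩)]
          · rw [hval y z hyz, hval x (d y z) (fun ⟨_, e⟩ => hne y z e), sand']
      have c2 : ∀ x y z, h (d x y) z = d x (h y z) := by
        intro x y z
        rw [hval (d x y) z (fun ⟨e, _⟩ => hne x y e), sand]
        by_cases hyz : y = a ∧ z = a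
        · obtain ⟨hy, hz⟩ := hyz
          rw [hy, hz, haa]
        · rw [hval y z hyz, sand']
      have c3 : ∀ x y z, d (h x y) z = h x (d y z) := by
        intro x y z
        rw [hval x (d y z) (fun ⟨_, e⟩ => hne y z e), sand']
        by_cases hxy : x = a ∧ y = a
        · obtain ⟨hx, hy⟩ := hxy
          rw [hx, hy, haa]
        · rw [hval x y hxy, sand]
      have := H h c1 c2 c3
      have e : h a a = d a a := congrFun (congrFun this a) a
      rw [haa] at e
      exact ha e.symm
    intro x y
    rw [sand, idem]
  · -- rectangular band: all interassociates coincide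
    intro rect
    have k1 : ∀ x z, d x (d z x) = x := by
      intro x z; rw [← d_assoc]; exact rect x z
    have collapse : ∀ x y z, d x (d y z) = d x z := by
      intro x y z
      have : d x z = d x (d y z) := by
        calc d x z = d x (d (d z (d x y)) z) := by rw [rect z (d x y)]
          _ = d (d x (d z (d x y))) z := by rw [← d_assoc x (d z (d x y)) z]
          _ = d (d x (d (d z x) y)) z := by rw [d_assoc z x y]
          _ = d (d (d x (d z x)) y) z := by rw [d_assoc x (d z x) y]
          _ = d (d x y) z := by rw [k1]
          _ = d x (d y z) := d_assoc _ _ _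
      exact this.symm
    intro h hassoc c2 c3
    funext x y
    set c := h x y with hc
    have e1 : c = d x c := by
      conv_lhs => rw [hc, show x = d (d x y) x from (rect x y).symm, c2, ← hc]
      rw [d_assoc, collapse]
    have e2 : c = d c y := by
      conv_lhs => rw [hc, show y = d y (d y y) from (k1 y y).symm, ← c3, ← hc]
      rw [collapse]
    rw [e1, e2, collapse]
end

section
/- Let (M, ⊣) be a monoid with identity e, and let M^{~1} = M ∪ {1̃} where 1̃ ∉ M, with operation extended by 1̃ ⊣ 1̃ = e and 1̃ ⊣ m = m ⊣ 1̃ = m for m ∈ M. If (M^{~1}, ⊢) is an interassociate of (M^{~1}, ⊣) with 1̃ ⊢ 1̃ = 1̃, then ⊢ restricted to M equals ⊣, and 1̃ ⊢ s = s ⊢ 1̃ = s for all s ∈ M^{~1} (i.e., (M^{~1}, ⊢) is M with 1̃ as an adjoined identity). -/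
/-- Let `(M, ⊣)` be a monoid and `M^{~1} = M ∪ {1̃}` (modelled as `Option M` with
`none = 1̃`), with `1̃ ⊣ 1̃ = e` and `1̃` acting as identity otherwise. If `⊢` is an
interassociate of `⊣` with `1̃ ⊢ 1̃ = 1̃`, then `⊢` restricted to `M` is `⊣` and `1̃` is
an identity for `⊢`. -/
theorem interassociate_of_almost_monoid_case_one {M : Type*} [Monoid M]
    (h : Option M → Option M → Option M)
    (h_assoc : ∀ x y z, h (h x y) z = h x (h y z))
    (inter1 : ∀ x y z : Option M,
      h ((fun p q => match p, q with
            | some a, some b => some (a * b)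
            | some a, none => some a
            | none, some b => some b
            | none, none => some 1) x y) z
        = (fun p q => match p, q with
            | some a, some b => some (a * b)
            | some a, none => some a
            | none, some b => some b
            | none, none => some 1) x (h y z))
    (inter2 : ∀ x y z : Option M,
      (fun p q => match p, q with
          | some a, some b => some (a * b)
          | some a, none => some a
          | none, some b => some b
          | none, none => some 1) (h x y) z
        = h x ((fun p q => match p, q with
            | some a, some b => some (a * b)
            | some a, none => some a
            | none, some b => some b
            | none, none => some 1) y z))
    (h11 : h none none = none) :
    (∀ x y : M, h (some x) (some y) = some (x * y)) ∧
    (∀ s : Option M, h none s = s ∧ h s none = s) := by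
  have hns : ∀ b : M, h none (some b) = some b := by
    intro b
    have := inter2 none none (some b)
    simp only [h11] at this
    exact this.symm
  have hsn : ∀ a : M, h (some a) none = some a := by
    intro a
    have := inter1 (some a) none none
    simp only [h11] at this
    exact this
  refine ⟨?_, ?_⟩
  · intro x y
    have := inter1 (some x) none (some y)
    simp only [hns] at this
    exact this
  · rintro (_ | s)
    · exact ⟨h11, h11⟩
    · exact ⟨hns s, hsn s⟩
end

section
/- If (D₁, ⊣₁, ⊢₁) and (D₂, ⊣₂, ⊢₂) are doppelsemigroups such that (D₁, ⊣₁) and (D₂, ⊣₂) are null semigroups (all products equal a fixed zero), and the semigroups (D₁, ⊢₁) and (D₂, ⊢₂) are isomorphic, then the doppelsemigroups (D₁, ⊣₁, ⊢₁) and (D₂, ⊣₂, ⊢₂) are isomorphic. -/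
/-- A doppelsemigroup: two associative operations satisfying the interassociativity
axioms. -/
structure DoppelSG (D : Type*) where
  l : D → D → D
  r : D → D → D
  l_assoc : ∀ x y z, l (l x y) z = l x (l y z)
  r_assoc : ∀ x y z, r (r x y) z = r x (r y z)
  d1 : ∀ x y z, r (l x y) z = l x (r y z)
  d2 : ∀ x y z, l (r x y) z = r x (l y z)

/-- If `(D₁, ⊣₁, ⊢₁)` and `(D₂, ⊣₂, ⊢₂)` are doppelsemigroups whose first operations
are null semigroups, and `(D₁, ⊢₁) ≅ (D₂, ⊢₂)` as semigroups, then the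
doppelsemigroups are isomorphic. -/
theorem null_doppelsemigroups_isomorphic {D₁ D₂ : Type*}
    (A : DoppelSG D₁) (B : DoppelSG D₂)
    (z₁ : D₁) (hz₁ : ∀ x y, A.l x y = z₁)
    (z₂ : D₂) (hz₂ : ∀ x y, B.l x y = z₂)
    (ψ : D₁ ≃ D₂) (hψ : ∀ x y, ψ (A.r x y) = B.r (ψ x) (ψ y)) :
    ∃ φ : D₁ ≃ D₂, (∀ x y, φ (A.l x y) = B.l (φ x) (φ y)) ∧
                   (∀ x y, φ (A.r x y) = B.r (φ x) (φ y)) := by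
  -- z₁ is a left zero for A.r : A.r z₁ w = z₁
  have hlz : ∀ w, A.r z₁ w = z₁ := fun w => by
    have := A.d1 z₁ z₁ w
    rw [hz₁, hz₁] at this; exact this
  -- z₂ is a right zero for B.r : B.r w z₂ = z₂
  have hrz : ∀ w, B.r w z₂ = z₂ := fun w => by
    have := B.d2 w z₂ z₂
    rw [hz₂, hz₂] at this; exact this.symm
  have key : ψ z₁ = z₂ := by
    have h1 : ψ (A.r z₁ (ψ.symm z₂)) = B.r (ψ z₁) z₂ := by
      rw [hψ, ψ.apply_symm_apply]
    rw [hlz, hrz] at h1; exact h1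
  exact ⟨ψ, fun x y => by rw [hz₁, hz₂, key], hψ⟩
end

section
/- There are, up to isomorphism, exactly 8 doppelsemigroups on a two-element set: the trivial ones C₂, L₂, O₂, LO₂, RO₂, together with C₂ ⋈ C₂⁻¹, O₂ ⋈ L₂ and L₂ ⋈ O₂; equivalently, the number of isomorphism classes of doppelsemigroups of order 2 is 8. -/
/-- Isomorphism of doppelsemigroup structures on the same (two-element) carrier. -/
def DoppelIso {D : Type*} (A B : DoppelSG D) : Prop :=
  ∃ ψ : D ≃ D, (∀ x y, ψ (A.l x y) = B.l (ψ x) (ψ y)) ∧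
               (∀ x y, ψ (A.r x y) = B.r (ψ x) (ψ y))

/-- The doppelsemigroup axioms, as a predicate on pairs of binary operations. -/
def DProp (p : (Bool → Bool → Bool) × (Bool → Bool → Bool)) : Prop :=
  (∀ x y z, p.1 (p.1 x y) z = p.1 x (p.1 y z)) ∧
  (∀ x y z, p.2 (p.2 x y) z = p.2 x (p.2 y z)) ∧
  (∀ x y z, p.2 (p.1 x y) z = p.1 x (p.2 y z)) ∧
  (∀ x y z, p.1 (p.2 x y) z = p.2 x (p.1 y z))

abbrev DSub := {p : (Bool → Bool → Bool) × (Bool → Bool → Bool) // DProp p}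

def dRel (a b : DSub) : Prop :=
  ∃ ψ : Bool ≃ Bool, (∀ x y, ψ (a.1.1 x y) = b.1.1 (ψ x) (ψ y)) ∧
               (∀ x y, ψ (a.1.2 x y) = b.1.2 (ψ x) (ψ y))

instance : DecidablePred DProp := fun _ => by unfold DProp; infer_instance
instance : DecidableRel dRel := fun _ _ => by unfold dRel; infer_instance

theorem dRel_equiv : Equivalence dRel := by
  constructor
  · intro a; exact ⟨Equiv.refl _, fun _ _ => rfl, fun _ _ => rfl⟩
  · rintro a b ⟨ψ, h1, h2⟩
    refine ⟨ψ.symm, fun x y => ?_, fun x y => ?_⟩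
    · have := h1 (ψ.symm x) (ψ.symm y); simp at this
      rw [← this]; simp
    · have := h2 (ψ.symm x) (ψ.symm y); simp at this
      rw [← this]; simp
  · rintro a b c ⟨ψ, h1, h2⟩ ⟨φ, g1, g2⟩
    exact ⟨ψ.trans φ, fun x y => by simp [h1, g1], fun x y => by simp [h2, g2]⟩

instance dSetoid : Setoid DSub := ⟨dRel, dRel_equiv⟩

def dEquiv : DoppelSG Bool ≃ DSub where
  toFun A := ⟨(A.l, A.r), A.l_assoc, A.r_assoc, A.d1, A.d2⟩
  invFun p := ⟨p.1.1, p.1.2, p.2.1, p.2.2.1, p.2.2.2.1, p.2.2.2.2⟩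
  left_inv _ := rfl
  right_inv _ := rfl

instance : Fintype DSub := Subtype.fintype _
instance : DecidableRel (α := DSub) (· ≈ ·) :=
  fun a b => inferInstanceAs (Decidable (dRel a b))
instance : Fintype (Quotient dSetoid) := Quotient.fintype dSetoid

/-- There are exactly `8` doppelsemigroups of order `2` up to isomorphism. -/
theorem card_doppelsemigroups_order_two :
    Nat.card (Quot (fun A B : DoppelSG Bool => DoppelIso A B)) = 8 := by
  have e : Quot (fun A B : DoppelSG Bool => DoppelIso A B) ≃ Quotient dSetoid :=
    Quot.congr dEquiv (fun a b => Iff.rfl)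
  rw [Nat.card_congr e, Nat.card_eq_fintype_card]
  decide
end
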